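/- Let G = (V, E_o ∪ E_e) be a finite directed graph whose edge set is partitioned into ordinary edges E_o and e-edges E_e, and suppose E_e ≠ ∅. Let →ᵈ = E_o ∪ E_o⁻¹ ∪ E_e. If G contains no cycle under →ᵈ that uses at least one e-edge, then there exists a vertex u with an outgoing e-edge such that the set R(u) of vertices reachable from u using only edges from E_o ∪ E_o⁻¹ has no incoming e-edge, i.e., there is no (b, a) ∈ E_e with a ∈ R(u). -/

import Mathlib

/-- In a finite graph with ordinary edges `Eo` and e-edges `Ee ≠ ∅`, if there
is no cycle under `→ᵈ = Eo ∪ Eo⁻¹ ∪ Ee` using an e-edge, then some vertex `u`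
with an outgoing e-edge has a reachable set `R(u)` (under `Eo ∪ Eo⁻¹`) without
incoming e-edges. -/
theorem exists_vertex_with_eedge_free_reachable_set
    {V : Type} [Fintype V] (Eo Ee : V → V → Prop)
    (hne : ∃ x y, Ee x y)
    (hnocycle : ¬ ∃ (n : ℕ) (c : ℕ → V),
      (∀ i ≤ n, Eo (c i) (c (i+1)) ∨ Eo (c (i+1)) (c i) ∨ Ee (c i) (c (i+1))) ∧
      c 0 = c (n+1) ∧ ∃ i ≤ n, Ee (c i) (c (i+1))) :
    ∃ u, (∃ v, Ee u v) ∧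
      ∀ a, Relation.ReflTransGen (fun x y => Eo x y ∨ Eo y x) u a →
        ∀ b, ¬ Ee b a := by
  classical
  set D : V → V → Prop := fun x y => Eo x y ∨ Eo y x ∨ Ee x y with hD
  set sym : V → V → Prop := fun x y => Eo x y ∨ Eo y x with hsym
  -- convert a ReflTransGen D path to an explicit sequence
  have toSeq : ∀ {a b : V}, Relation.ReflTransGen D a b →
      ∃ n, ∃ c : ℕ → V, c 0 = a ∧ c n = b ∧ ∀ i < n, D (c i) (c (i+1)) := by
    intro a b h
    induction h with
    | refl => exact ⟨0, fun _ => a, rfl, rfl, fun i hi => absurd hi (by omega)⟩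
    | @tail m d hab hstep ih =>
      obtain ⟨n, c, hc0, hcn, hs⟩ := ih
      refine ⟨n + 1, fun i => if i ≤ n then c i else d, ?_, ?_, ?_⟩
      · simp [hc0]
      · simp
      · intro i hi
        by_cases h1 : i < n
        · simp only [le_of_lt h1, if_pos, h1.le, if_pos (by omega : i + 1 ≤ n)]
          exact hs i h1
        · have hin : i = n := by omega
          subst hin
          simp only [le_refl, if_pos, if_neg (by omega : ¬ i + 1 ≤ i)]
          rw [hcn]; exact hstep
  -- no e-edge can lie on a D-cycle
  have hnc : ∀ x y, Ee x y → ¬ Relation.ReflTransGen D y x := by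
    intro x y hxy h
    obtain ⟨n, c, hc0, hcn, hs⟩ := toSeq h
    apply hnocycle
    refine ⟨n, fun i => if i = 0 then x else c (i - 1), ?_, ?_, ?_⟩
    · intro i hi
      by_cases h0 : i = 0
      · subst h0
        simp only [if_pos rfl, if_neg (by omega : ¬ (0:ℕ) + 1 = 0)]
        simp only [Nat.add_sub_cancel, hc0]
        exact Or.inr (Or.inr hxy)
      · simp only [if_neg h0, if_neg (by omega : ¬ i + 1 = 0)]
        have h1 : i - 1 < n := by omega
        have h2 : i - 1 + 1 = i := by omega
        have := hs (i - 1) h1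
        rwa [h2] at this
      -- closure of c₀ = c_{n+1}
    · simp only [if_neg (by omega : ¬ n + 1 = 0), Nat.add_sub_cancel, hcn, if_true, eq_self_iff_true]
    · refine ⟨0, Nat.zero_le n, ?_⟩
      simp only [if_neg (by omega : ¬ (0:ℕ) + 1 = 0), Nat.add_sub_cancel, hc0, if_true,
        eq_self_iff_true]
      exact hxy
  by_contra hcon
  push_neg at hcon
  -- every e-edge source has an incoming e-edge into its reachable set
  have hstep : ∀ u : {u : V // ∃ v, Ee u v},
      ∃ w : {u : V // ∃ v, Ee u v}, ∃ a, Ee w.1 a ∧ Relation.ReflTransGen D a u.1 := by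
    rintro ⟨u, hu⟩
    obtain ⟨a, hra, b, hb⟩ := hcon u hu
    have hsymm : Symmetric sym := by
      intro x y hxy; exact hxy.symm
    have hrev : Relation.ReflTransGen sym a u :=
      by haveI : Std.Symm sym := ⟨hsymm⟩; exact Std.Symm.symm _ _ hra
    have : Relation.ReflTransGen D a u :=
      Relation.ReflTransGen.mono (fun x y (hxy : sym x y) => hxy.elim Or.inl (Or.inr ∘ Or.inl)) _ _ hrev
    exact ⟨⟨b, a, hb⟩, a, hb, this⟩
  choose g hg using hstep
  obtain ⟨x, y, hxy⟩ := hne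
  set f : ℕ → {u : V // ∃ v, Ee u v} := fun k => g^[k] ⟨x, y, hxy⟩ with hf
  have hfs : ∀ k, f (k + 1) = g (f k) := by
    intro k; simp [hf, Function.iterate_succ_apply']
  -- chains
  have chain : ∀ k i, ∃ a, Ee (f (i + k + 1)).1 a ∧ Relation.ReflTransGen D a (f i).1 := by
    intro k
    induction k with
    | zero =>
      intro i
      obtain ⟨a, ha, hr⟩ := hg (f i)
      exact ⟨a, by rw [show i + 0 + 1 = i + 1 by ring, hfs]; exact ha, hr⟩
    | succ k ih =>
      intro i
      obtain ⟨a, ha, hr⟩ := ih i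
      obtain ⟨a', ha', hr'⟩ := hg (f (i + k + 1))
      refine ⟨a', ?_, ?_⟩
      · rw [show i + (k + 1) + 1 = (i + k + 1) + 1 by ring, hfs]; exact ha'
      · exact hr'.trans (Relation.ReflTransGen.head (Or.inr (Or.inr ha)) hr)
  -- pigeonhole
  obtain ⟨i, j, hij, heq⟩ := Finite.exists_ne_map_eq_of_infinite f
  wlog hlt : i < j generalizing i j
  · exact this j i hij.symm heq.symm (by omega)
  obtain ⟨a, ha, hr⟩ := chain (j - i - 1) i
  rw [show i + (j - i - 1) + 1 = j by omega] at ha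
  rw [heq] at hr
  exact hnc (f j).1 a ha hr
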